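/- Let T be a perfect topology on ℕ such that for every n ∈ ℕ, the family T*(n) = {V \ {n} : V ∈ T, n ∈ V} is a filter basis generating an ultrafilter on ℕ \ {n}. Then T is a maximal perfect topology. -/

import Mathlib

open Set Topology TopologicalSpace

/-- A topology is perfect if every nonempty open set is infinite. -/
def IsPerfectTop {U : Type*} (T : TopologicalSpace U) : Prop :=
  ∀ V : Set U, IsOpen[T] V → V.Nonempty → V.Infinite

/-- A perfect topology is maximal if no strictly finer topology is perfect. -/
def IsMaxPerfectTop {U : Type*} (T : TopologicalSpace U) : Prop :=
  IsPerfectTop T ∧ ∀ T' : TopologicalSpace U, T' ≤ T → IsPerfectTop T' → T' = T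

/-- `(U, T, C)` is a Mammen space. -/
structure IsMammen {U : Type*} (T : TopologicalSpace U) (C : Set (Set U)) : Prop where
  nonemptyU : Nonempty U
  perfect : IsPerfectTop T
  hausdorff : @T2Space U T
  exNonempty : ∃ c ∈ C, c.Nonempty
  unionMem : ∀ c ∈ C, ∀ d ∈ C, c ∪ d ∈ C
  interMem : ∀ c ∈ C, ∀ d ∈ C, c ∩ d ∈ C
  singletonMem : ∀ c ∈ C, c.Nonempty → ∃ x ∈ c, ({x} : Set U) ∈ C
  emptyMem : ∅ ∈ C
  openInterC : ∀ s ∈ C, IsOpen[T] s → s = ∅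
  interOpenMem : ∀ c ∈ C, ∀ s : Set U, IsOpen[T] s → c ∩ s ∈ C

/-- A Mammen space is complete if every subset is the union of an open set
and a choice category. -/
def MammenComplete {U : Type*} (T : TopologicalSpace U) (C : Set (Set U)) : Prop :=
  ∀ X : Set U, ∃ s c, IsOpen[T] s ∧ c ∈ C ∧ X = s ∪ c


theorem stmt18 (T : TopologicalSpace ℕ) (hperf : IsPerfectTop T)
    (hultra : ∀ n : ℕ, ∀ A : Set ℕ, A ⊆ {n}ᶜ →
      (∃ V : Set ℕ, IsOpen[T] V ∧ n ∈ V ∧ V \ {n} ⊆ A) ∨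
      (∃ V : Set ℕ, IsOpen[T] V ∧ n ∈ V ∧ V \ {n} ⊆ {n}ᶜ \ A)) :
    IsMaxPerfectTop T := by
  refine ⟨hperf, fun T' hle hperf' => ?_⟩
  refine le_antisymm hle ?_
  intro W hW
  -- W is T'-open; show it is T-open
  rw [@isOpen_iff_forall_mem_open ℕ T W]
  intro n hn
  rcases hultra n (W \ {n}) (fun x hx => hx.2) with ⟨V, hV, hnV, hsub⟩ | ⟨V, hV, hnV, hsub⟩
  · refine ⟨V, fun x hx => ?_, hV, hnV⟩
    by_cases hx' : x = n
    · exact hx' ▸ hn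
    · exact (hsub ⟨hx, hx'⟩).1
  · exfalso
    have hVW : IsOpen[T'] (V ∩ W) := (hV.mono hle).inter hW
    have hsing : V ∩ W ⊆ {n} := by
      intro x ⟨hxV, hxW⟩
      by_contra hx'
      exact (hsub ⟨hxV, hx'⟩).2 ⟨hxW, hx'⟩
    exact (hperf' _ hVW ⟨n, hnV, hn⟩)
      ((Set.finite_singleton n).subset hsing)
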